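/- Let S be a semigroup satisfying the identity x·y·z·x·y = x·y for all x, y, z ∈ S, and suppose that for all x, y, z, u, w ∈ S, x·y·z = x·y·w·z or x·y·z = x·u·y·z. Then for all x, y, z ∈ S, x·y·y = x·y or z·z·x = z·x. -/
import Mathlib


theorem stmt_1 {S : Type*} [Semigroup S]
    (hGRB : ∀ x y z : S, x * y * z * x * y = x * y)
    (hI : ∀ x y z u w : S, x * y * z = x * y * w * z ∨ x * y * z = x * u * y * z) :
    ∀ x y z : S, x * y * y = x * y ∨ z * z * x = z * x := by
  intro x y z
  rcases hI z x y z y with h | h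
  · -- h : z * x * y = z * x * y * y
    left
    calc x * y * y = x * (y * y) * (z * z) * x * (y * y) := by
          rw [hGRB x (y * y) (z * z), ← mul_assoc]
      _ = x * y * y * z * (z * x * y * y) := by simp only [mul_assoc]
      _ = x * y * y * z * (z * x * y) := by rw [← h]
      _ = x * y * (y * (z * z)) * x * y := by simp only [mul_assoc]
      _ = x * y := hGRB x y (y * (z * z))
  · -- h : z * x * y = z * z * x * y
    right
    calc z * z * x = z * (z * x * (y * (z * y)) * z * x) := by
          rw [hGRB z x (y * (z * y)), ← mul_assoc]
      _ = z * z * x * y * (z * y * (z * x)) := by simp only [mul_assoc]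
      _ = z * x * y * (z * y * (z * x)) := by rw [← h]
      _ = z * x * (y * (z * y)) * z * x := by simp only [mul_assoc]
      _ = z * x := hGRB z x (y * (z * y))
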